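/- Let A ⊂ ℤ \ {0, ±1}, B ⊂ ℤ with all elements ≥ 2, and C ⊂ ℤ with all elements ≥ 1 be finite sets. Then there are infinitely many n such that 2^(2^n) cannot be written as c·b^e + a with a ∈ A, b ∈ B, c ∈ C, and e a positive integer. -/

import Mathlib

-- 2^n eventually dominates any linear function
lemma lin_le_two_pow (U V : ℕ) : ∃ n1 : ℕ, ∀ n, n1 ≤ n → U * n + V ≤ 2 ^ n := by
  refine ⟨(U + V + 2) ^ 2, fun n hn => ?_⟩
  set k := U + V with hk
  have hkn : k ≤ n := by nlinarith
  obtain ⟨j, hj⟩ : ∃ j, n = j + k := ⟨n - k, by omega⟩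
  have h1 : j + 1 ≤ 2 ^ j := Nat.lt_two_pow_self
  have h2 : k + 1 ≤ 2 ^ k := Nat.lt_two_pow_self
  have h3 : 2 ^ j * 2 ^ k = 2 ^ n := by rw [← pow_add]; congr 1; omega
  have h4 : (j + 1) * (k + 1) ≤ 2 ^ n := by
    calc (j + 1) * (k + 1) ≤ 2 ^ j * 2 ^ k := Nat.mul_le_mul h1 h2
    _ = 2 ^ n := h3
  have hUk : U * k ≤ k * k := Nat.mul_le_mul_right _ (by omega)
  have hkkj : k * k + k ≤ (k + 2) ^ 2 := by nlinarith
  have hj2 : U * k ≤ j := by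
    have : (k + 2) ^ 2 ≤ j + k := by omega
    linarith
  have h6 : U * n + V ≤ (j + 1) * (k + 1) := by
    have e1 : U * n + V = U * j + U * k + V := by rw [hj]; ring
    have e2 : (j + 1) * (k + 1) = U * j + V * j + j + k + 1 := by rw [hk]; ring
    have e3 : (0:ℕ) ≤ V * j := Nat.zero_le _
    have e4 : V ≤ k := by omega
    linarith
  linarith

-- decomposition into power of two times odd, over ℤ
lemma exists_odd_factor (x : ℤ) (hx : x ≠ 0) : ∃ (k : ℕ) (u : ℤ), ¬ (2:ℤ) ∣ u ∧ x = 2 ^ k * u := by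
  obtain ⟨k, u, hu, h⟩ := Nat.exists_eq_pow_mul_and_not_dvd (n := x.natAbs) (by simpa using hx) 2 (by norm_num)
  have hu' : ¬ (2:ℤ) ∣ (u : ℤ) := by exact_mod_cast hu
  rcases Int.natAbs_eq x with h' | h'
  · exact ⟨k, u, hu', by rw [h', h]; push_cast; ring⟩
  · refine ⟨k, -u, fun hd => hu' (dvd_neg.mp hd), by rw [h', h]; push_cast; ring⟩

lemma pow_two_mul_odd_inj {k l : ℕ} {u v : ℤ} (hu : ¬ (2:ℤ) ∣ u) (hv : ¬ (2:ℤ) ∣ v)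
    (h : 2 ^ k * u = 2 ^ l * v) : k = l := by
  rcases le_total k l with hkl | hkl
  · by_contra hne
    have hlt : k < l := lt_of_le_of_ne hkl hne
    have : (2:ℤ) ^ k * u = 2 ^ k * (2 ^ (l - k) * v) := by
      rw [h, ← mul_assoc, ← pow_add]; congr 2; omega
    have hu' : u = 2 ^ (l - k) * v := mul_left_cancel₀ (by positivity) this
    have hsp : (2:ℤ) ^ (l - k) = 2 * 2 ^ (l - k - 1) := by
      rw [← pow_succ']; congr 1; omega
    exact hu ⟨2 ^ (l - k - 1) * v, by rw [hu', hsp]; ring⟩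
  · by_contra hne
    have hlt : l < k := lt_of_le_of_ne hkl (Ne.symm hne)
    have : (2:ℤ) ^ l * v = 2 ^ l * (2 ^ (k - l) * u) := by
      rw [← h, ← mul_assoc, ← pow_add]; congr 2; omega
    have hv' : v = 2 ^ (k - l) * u := mul_left_cancel₀ (by positivity) this
    have hsp : (2:ℤ) ^ (k - l) = 2 * 2 ^ (k - l - 1) := by
      rw [← pow_succ']; congr 1; omega
    exact hv ⟨2 ^ (k - l - 1) * u, by rw [hv', hsp]; ring⟩


lemma key_gap_even (a b c : ℤ) (ha : 2 ≤ |a|) (hb : 2 ≤ b) (hc : 1 ≤ c) (hbe : (2:ℤ) ∣ b) :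
    ∃ n1 : ℕ, ∀ n m e f : ℕ, n1 ≤ n → n < m → 1 ≤ e → 1 ≤ f →
      (2:ℤ) ^ (2 ^ n) = c * b ^ e + a → (2:ℤ) ^ (2 ^ m) = c * b ^ f + a → 2 * n < m := by
  have ha0 : a ≠ 0 := by intro h; rw [h] at ha; simp at ha
  obtain ⟨k, u, hu, hau⟩ := exists_odd_factor a ha0
  obtain ⟨j, c', hc', hcc⟩ := exists_odd_factor c (by omega)
  obtain ⟨s, b', hb', hbb⟩ := exists_odd_factor b (by omega)
  have hs : 1 ≤ s := by
    rcases Nat.eq_zero_or_pos s with h0 | h; · exfalso; apply hb'; rw [hbb, h0, pow_zero, one_mul] at hbe; exact hbe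
    · exact h
  refine ⟨k + 1, fun n m e f hn1 hnm he hf hen hem => ?_⟩
  exfalso
  have hkn : k < 2 ^ n := lt_of_lt_of_le (by omega : k < n) (Nat.le_of_lt ((Nat.lt_two_pow_self (n := n))))
  have hkm : k < 2 ^ m := lt_of_lt_of_le hkn (Nat.pow_le_pow_right (by norm_num) (le_of_lt hnm))
  -- key structural fact, for both n and m
  have key : ∀ (N : ℕ) (g : ℕ), k < 2 ^ N → (2:ℤ) ^ (2 ^ N) = c * b ^ g + a → j + s * g = k := by
    intro N g hkN heq
    have h1 : c * b ^ g = 2 ^ (j + s * g) * (c' * b' ^ g) := by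
      rw [hcc, hbb]; rw [mul_pow, ← pow_mul]; ring
    have h2 : (2:ℤ) ^ (2 ^ N) - a = 2 ^ k * (2 ^ (2 ^ N - k) - u) := by
      rw [hau, mul_sub]; congr 1; rw [← pow_add]; congr 1; omega
    have hodd1 : ¬ (2:ℤ) ∣ (c' * b' ^ g) := by
      intro hd
      rcases (Int.prime_two.dvd_mul).mp hd with h | h
      · exact hc' h
      · exact hb' (Int.prime_two.dvd_of_dvd_pow h)
    have hodd2 : ¬ (2:ℤ) ∣ (2 ^ (2 ^ N - k) - u) := by
      intro hd
      apply hu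
      have h2d : (2:ℤ) ∣ 2 ^ (2 ^ N - k) := dvd_pow_self 2 (by omega)
      have : u = 2 ^ (2 ^ N - k) - (2 ^ (2 ^ N - k) - u) := by ring
      rw [this]; exact dvd_sub h2d hd
    have heq2 : (2:ℤ) ^ (j + s * g) * (c' * b' ^ g) = 2 ^ k * (2 ^ (2 ^ N - k) - u) := by
      rw [← h1, ← h2, heq]; ring
    exact pow_two_mul_odd_inj hodd1 hodd2 heq2
  have he1 := key n e hkn hen
  have he2 := key m f hkm hem
  have hef : e = f := Nat.eq_of_mul_eq_mul_left (by omega) (by omega : s * e = s * f)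
  have : (2:ℤ) ^ (2 ^ n) = 2 ^ (2 ^ m) := by rw [hen, hem, hef]
  have hlt : (2:ℤ) ^ (2 ^ n) < 2 ^ (2 ^ m) := by
    apply pow_lt_pow_right₀ (by norm_num)
    exact Nat.pow_lt_pow_right (by norm_num) hnm
  omega


lemma key_gap_odd (a b c : ℤ) (ha : 2 ≤ |a|) (hb : 2 ≤ b) (hc : 1 ≤ c) (hbo : ¬ (2:ℤ) ∣ b) :
    ∃ n1 : ℕ, ∀ n m e f : ℕ, n1 ≤ n → n < m → 1 ≤ e → 1 ≤ f →
      (2:ℤ) ^ (2 ^ n) = c * b ^ e + a → (2:ℤ) ^ (2 ^ m) = c * b ^ f + a → 2 * n < m := by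
  set p := b.natAbs.minFac with hpdef
  set a0 := a.natAbs with ha0def
  set b0 := b.toNat with hb0def
  set c0 := c.toNat with hc0def
  have hbabs : 2 ≤ b.natAbs := by omega
  have pp : p.Prime := Nat.minFac_prime (by omega)
  have hpb : p ∣ b.natAbs := Nat.minFac_dvd _
  have hp2 : p ≠ 2 := by
    intro h
    apply hbo
    have : ((2:ℤ)).natAbs ∣ b.natAbs := by rw [show (2:ℤ).natAbs = 2 from rfl, ← h]; exact hpb
    exact Int.natAbs_dvd_natAbs.mp this
  have hp3 : 3 ≤ p := by have := pp.two_le; omega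
  have podd : Odd p := pp.odd_of_ne_two hp2
  have hpbZ : (p:ℤ) ∣ b := Int.dvd_natAbs.mp (Int.natCast_dvd_natCast.mpr hpb)
  haveI : Fact p.Prime := ⟨pp⟩
  have hpnd2 : ¬ p ∣ 2 := by intro h; have := Nat.le_of_dvd (by norm_num) h; omega
  have hb0 : 2 ≤ b0 := by omega
  have hc0 : 1 ≤ c0 := by omega
  obtain ⟨n1, hn1⟩ := lin_le_two_pow (a0 + 2*b0 + 1) (a0 + 1 + b0*(p+2) + c0 + 2)
  refine ⟨n1, fun n m e f hn hnm he hf hen hem => ?_⟩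
  have hlin := hn1 n hn
  have hth1 : a0 + 1 ≤ 2 ^ n := by
    have h0 : 0 ≤ (a0 + 2*b0 + 1) * n := Nat.zero_le _
    have h00 : 0 ≤ b0*(p+2) := Nat.zero_le _
    linarith
  have hth2 : b0*(2*n + p + 2) + c0 + 2 ≤ 2 ^ n := by
    have hmul : 2*b0*n ≤ (a0 + 2*b0 + 1) * n := Nat.mul_le_mul_right n (by omega)
    have expand : b0*(2*n+p+2) = 2*b0*n + b0*(p+2) := by ring
    have h0 : 0 ≤ a0 := Nat.zero_le _
    linarith
  -- e < f
  have hpowlt : (2:ℤ) ^ (2^n) < 2 ^ (2^m) :=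
    pow_lt_pow_right₀ (by norm_num) (Nat.pow_lt_pow_right (by norm_num) hnm)
  have hcb : c * b ^ e < c * b ^ f := by omega
  have hble : b ^ e < b ^ f := lt_of_mul_lt_mul_left hcb (by omega)
  have hef : e < f := by
    by_contra hcon
    have : b ^ f ≤ b ^ e := pow_le_pow_right₀ (by omega) (by omega)
    omega
  -- divisibility
  have hdiff : (2:ℤ)^(2^m) - 2^(2^n) = c * b^f - c * b^e := by rw [hen, hem]; ring
  have hdvd : b ^ e ∣ (2:ℤ)^(2^m) - 2^(2^n) := by
    rw [hdiff]
    exact dvd_sub (dvd_mul_of_dvd_right (pow_dvd_pow b hef.le) c) (dvd_mul_left _ _)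
  have h2nm : (2:ℕ)^n < 2^m := Nat.pow_lt_pow_right (by norm_num) hnm
  set D := 2^m - 2^n with hDdef
  have hD1 : 1 ≤ D := by omega
  have hDeq : 2^n + D = 2^m := by omega
  have hfac : (2:ℤ)^(2^m) - 2^(2^n) = 2^(2^n) * (2^D - 1) := by
    rw [← hDeq, pow_add]; ring
  have hcop : IsCoprime ((2:ℤ)^(2^n)) (b ^ e) :=
    IsCoprime.pow (Int.prime_two.coprime_iff_not_dvd.mpr hbo)
  have hdvd2 : b ^ e ∣ (2:ℤ)^D - 1 := by
    apply (hcop.symm).dvd_of_dvd_mul_left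
    rw [← hfac]; exact hdvd
  have hpdvdZ : ((p:ℤ))^e ∣ (2:ℤ)^D - 1 :=
    dvd_trans (pow_dvd_pow_of_dvd hpbZ e) hdvd2
  have h1le : (1:ℕ) ≤ 2^D := Nat.one_le_two_pow
  have hpdvd : p ^ e ∣ 2^D - 1 := by
    have hcast : ((2^D - 1 : ℕ) : ℤ) = (2:ℤ)^D - 1 := by push_cast [h1le]; ring
    rw [← Int.natCast_dvd_natCast, hcast]; push_cast; exact hpdvdZ
  set M := 2^D - 1 with hMdef
  have hM0 : M ≠ 0 := by
    have : (2:ℕ) ≤ 2^D := by calc (2:ℕ) = 2^1 := rfl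
                                _ ≤ 2^D := Nat.pow_le_pow_right (by norm_num) hD1
    omega
  have hpdvd1 : p ∣ M := dvd_trans (dvd_pow_self p (by omega)) hpdvd
  -- ZMod facts
  have h2ne0 : (2 : ZMod p) ≠ 0 := by
    intro h
    have : ((2:ℕ) : ZMod p) = 0 := by exact_mod_cast h
    exact hpnd2 ((ZMod.natCast_eq_zero_iff 2 p).mp this)
  have hz1 : (2 : ZMod p) ^ D = 1 := by
    have h0 : ((M : ℕ) : ZMod p) = 0 := (ZMod.natCast_eq_zero_iff M p).mpr hpdvd1
    have : ((2:ZMod p))^D - 1 = 0 := by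
      rw [hMdef] at h0; push_cast [h1le] at h0; exact_mod_cast h0
    linear_combination this
  have hz2 : (2 : ZMod p) ^ (p - 1) = 1 := ZMod.pow_card_sub_one_eq_one h2ne0
  set g := Nat.gcd D (p - 1) with hgdef
  have hgz : (2 : ZMod p) ^ g = 1 := pow_gcd_eq_one.mpr ⟨hz1, hz2⟩
  have hgdvdD : g ∣ D := Nat.gcd_dvd_left _ _
  have hgle : g ≤ p - 1 := Nat.le_of_dvd (by omega) (Nat.gcd_dvd_right _ _)
  have hg1 : 1 ≤ g := Nat.gcd_pos_of_pos_left _ (by omega)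
  have h1leg : (1:ℕ) ≤ 2^g := Nat.one_le_two_pow
  have hpg : p ∣ 2^g - 1 := by
    rw [← ZMod.natCast_eq_zero_iff]
    push_cast [h1leg]
    rw [hgz]; ring
  set t := D / g with htdef
  have htD : g * t = D := Nat.mul_div_cancel' hgdvdD
  have ht0 : t ≠ 0 := by intro h; rw [h] at htD; omega
  have hval : padicValNat p M = padicValNat p (2^g - 1) + padicValNat p t := by
    have h1 : M = (2^g)^t - 1^t := by rw [one_pow, ← pow_mul, htD]
    rw [h1]
    exact padicValNat.pow_sub_pow podd (Nat.one_lt_two_pow_iff.mpr (by omega))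
      (by simpa using hpg) (fun hdx => hpnd2 (pp.dvd_of_dvd_pow hdx)) ht0
  have he_le : e ≤ padicValNat p M := by
    have := (pp.pow_dvd_iff_le_factorization hM0).mp hpdvd
    rwa [Nat.factorization_def M pp] at this
  set k0 := padicValNat p (2^g - 1) with hk0def
  have hk0 : k0 ≤ p := by
    have hd : p ^ k0 ∣ 2^g - 1 := pow_padicValNat_dvd
    have hpos : 0 < 2^g - 1 := by
      have : (2:ℕ) ≤ 2^g := by calc (2:ℕ) = 2^1 := rfl
                                  _ ≤ 2^g := Nat.pow_le_pow_right (by norm_num) hg1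
      omega
    have h1 : p ^ k0 ≤ 2^g - 1 := Nat.le_of_dvd hpos hd
    have h2 : 2 ^ k0 ≤ p ^ k0 := Nat.pow_le_pow_left (by omega) _
    have h3 : (2:ℕ)^g ≤ 2^(p-1) := Nat.pow_le_pow_right (by norm_num) hgle
    by_contra hcon
    have h4 : (2:ℕ)^(p-1) ≤ 2^k0 := Nat.pow_le_pow_right (by norm_num) (by omega)
    omega
  set v := padicValNat p t with hvdef
  have hvd : p ^ v ∣ t := pow_padicValNat_dvd
  have htD2 : t ∣ D := Dvd.intro_left g htD
  have hpvD : p ^ v ∣ D := hvd.trans htD2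
  have hxy : (2:ℕ)^n * 2^(m-n) = 2^m := by rw [← pow_add]; congr 1; omega
  have hmp : 2^n * (2^(m-n) - 1) = D := by
    rw [show (2:ℕ)^(m-n) - 1 = Nat.pred (2^(m-n)) from rfl, Nat.mul_pred, hxy]
  have hcoppv : Nat.Coprime (p ^ v) (2 ^ n) :=
    Nat.Coprime.pow _ _ (pp.coprime_iff_not_dvd.mpr hpnd2)
  have hdvd3 : p ^ v ∣ 2^(m-n) - 1 := by
    apply Nat.Coprime.dvd_of_dvd_mul_right hcoppv
    rw [mul_comm] at hmp
    rw [hmp]; exact hpvD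
  have hmn1 : 1 ≤ m - n := by omega
  have hpos2 : 0 < 2^(m-n) - 1 := by
    have : (2:ℕ) ≤ 2^(m-n) := by calc (2:ℕ) = 2^1 := rfl
                                    _ ≤ 2^(m-n) := Nat.pow_le_pow_right (by norm_num) hmn1
    omega
  have hvlt : v < m - n := by
    have h1 : p ^ v ≤ 2^(m-n) - 1 := Nat.le_of_dvd hpos2 hdvd3
    have h2 : 2 ^ v ≤ p ^ v := Nat.pow_le_pow_left (by omega) _
    by_contra hcon
    have h4 : (2:ℕ)^(m-n) ≤ 2^v := Nat.pow_le_pow_right (by norm_num) (by omega)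
    omega
  -- lower bound for e
  have habs : |a| ≤ (2:ℤ)^a0 := by
    rw [Int.abs_eq_natAbs]
    exact_mod_cast (Nat.lt_two_pow_self (n := a0)).le
  have ha2n : (2:ℤ)^a0 ≤ 2^(2^n - 1) := by
    apply pow_le_pow_right₀ (by norm_num)
    omega
  have hsplit : (2:ℤ)^(2^n) = 2^(2^n - 1) * 2 := by
    rw [← pow_succ]; congr 1; have := hth1; omega
  have hlow : (2:ℤ)^(2^n - 1) ≤ c * b^e := by
    have h1 : a ≤ |a| := le_abs_self a
    have h2 : c * b^e = 2^(2^n) - a := by omega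
    have h3 : |a| ≤ 2^(2^n - 1) := le_trans habs ha2n
    omega
  have hcle : (c:ℤ) ≤ 2^c0 := by
    have h1 : c0 < 2^c0 := Nat.lt_two_pow_self
    have h2 : c = (c0:ℤ) := by omega
    rw [h2]; exact_mod_cast h1.le
  have hble2 : (b:ℤ) ≤ 2^b0 := by
    have h1 : b0 < 2^b0 := Nat.lt_two_pow_self
    have h2 : b = (b0:ℤ) := by omega
    rw [h2]; exact_mod_cast h1.le
  have hup : c * b^e ≤ (2:ℤ)^(c0 + b0*e) := by
    have h1 : b^e ≤ ((2:ℤ)^b0)^e := pow_le_pow_left₀ (by omega) hble2 e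
    have h2 : ((2:ℤ)^b0)^e = 2^(b0*e) := by rw [← pow_mul]
    have h3 : (0:ℤ) ≤ b^e := by positivity
    have h4 : c * b^e ≤ 2^c0 * 2^(b0*e) := by
      apply mul_le_mul hcle (h2 ▸ h1) h3 (by positivity)
    rw [pow_add]; exact h4
  have hexp : 2^n - 1 ≤ c0 + b0*e := by
    by_contra hcon
    have h1 : c0 + b0*e + 1 ≤ 2^n - 1 := by omega
    have h2 : (2:ℤ)^(c0+b0*e) * 2 ≤ 2^(2^n - 1) := by
      calc (2:ℤ)^(c0+b0*e) * 2 = 2^(c0+b0*e+1) := by rw [pow_succ]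
        _ ≤ 2^(2^n - 1) := pow_le_pow_right₀ (by norm_num) h1
    have := le_trans hlow (le_trans hup (by linarith))
    linarith
  -- final arithmetic
  have s0 : 2^n ≤ c0 + b0*e + 1 := by omega
  have s1 : b0*(2*n+p+2) < b0*e := by omega
  have s2 : 2*n + p + 2 < e := Nat.lt_of_mul_lt_mul_left s1
  omega


theorem infinitely_many_not_representable (A B C : Finset ℤ)
    (hA : ∀ a ∈ A, 2 ≤ |a|) (hB : ∀ b ∈ B, 2 ≤ b) (hC : ∀ c ∈ C, 1 ≤ c) :
    {n : ℕ | ∀ a ∈ A, ∀ b ∈ B, ∀ c ∈ C, ∀ e : ℕ, 1 ≤ e →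
      (2 : ℤ) ^ (2 ^ n) ≠ c * b ^ e + a}.Infinite := by
  classical
  set S := {n : ℕ | ∀ a ∈ A, ∀ b ∈ B, ∀ c ∈ C, ∀ e : ℕ, 1 ≤ e →
      (2 : ℤ) ^ (2 ^ n) ≠ c * b ^ e + a} with hSdef
  by_contra hfin
  rw [Set.not_infinite] at hfin
  obtain ⟨L, hL⟩ := hfin.bddAbove
  set T : Finset (ℤ × ℤ × ℤ) := A ×ˢ B ×ˢ C with hTdef
  have hgap : ∀ t ∈ T, ∃ n1 : ℕ, ∀ n m e f : ℕ, n1 ≤ n → n < m → 1 ≤ e → 1 ≤ f →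
      (2:ℤ) ^ (2 ^ n) = t.2.2 * t.2.1 ^ e + t.1 →
      (2:ℤ) ^ (2 ^ m) = t.2.2 * t.2.1 ^ f + t.1 → 2 * n < m := by
    intro t ht
    rw [hTdef, Finset.mem_product] at ht
    obtain ⟨ht1, ht2⟩ := ht
    rw [Finset.mem_product] at ht2
    rcases Classical.em ((2:ℤ) ∣ t.2.1) with hd | hd
    · exact key_gap_even t.1 t.2.1 t.2.2 (hA _ ht1) (hB _ ht2.1) (hC _ ht2.2) hd
    · exact key_gap_odd t.1 t.2.1 t.2.2 (hA _ ht1) (hB _ ht2.1) (hC _ ht2.2) hd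
  choose! F hF using hgap
  set K := T.sup F with hKdef
  set M := max (max K L) (T.card + 1) with hMdef
  have hM1 : 1 ≤ M := by omega
  have hnotS : ∀ n ∈ Finset.Ioc M (2*M), ∃ t ∈ T, ∃ e : ℕ, 1 ≤ e ∧
      (2:ℤ) ^ (2 ^ n) = t.2.2 * t.2.1 ^ e + t.1 := by
    intro n hn
    rw [Finset.mem_Ioc] at hn
    have hnS : n ∉ S := by
      intro hnS
      have := hL hnS
      omega
    rw [hSdef, Set.mem_setOf_eq] at hnS
    push_neg at hnS
    obtain ⟨a, haA, b, hbB, c, hcC, e, he, heq⟩ := hnS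
    refine ⟨(a, b, c), ?_, e, he, heq⟩
    rw [hTdef, Finset.mem_product, Finset.mem_product]
    exact ⟨haA, hbB, hcC⟩
  choose! w hwT ew hew heweq using hnotS
  have hsym : ∀ n ∈ Finset.Ioc M (2*M), ∀ n' ∈ Finset.Ioc M (2*M),
      w n = w n' → n < n' → False := by
    intro n hn n' hn' hww hlt
    have h1 := heweq n hn
    have h2 := heweq n' hn'
    rw [hww] at h1
    have hKle : F (w n') ≤ K := Finset.le_sup (hwT n' hn')
    have hb1 := Finset.mem_Ioc.mp hn
    have hb2 := Finset.mem_Ioc.mp hn'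
    have := hF (w n') (hwT n' hn') n n' (ew n) (ew n')
      (by omega) hlt (hew n hn) (hew n' hn') h1 h2
    omega
  have hinj : Set.InjOn w (Finset.Ioc M (2*M)) := by
    intro n hn n' hn' hww
    rcases lt_trichotomy n n' with h | h | h
    · exact absurd (hsym n (by simpa using hn) n' (by simpa using hn') hww h) not_false
    · exact h
    · exact absurd (hsym n' (by simpa using hn') n (by simpa using hn) hww.symm h) not_false
  have hcard := Finset.card_le_card_of_injOn w (fun n hn => hwT n hn) hinj
  rw [Nat.card_Ioc] at hcard
  omega
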